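/- If v = (v₁, …, vₘ) ∈ ℝᵐ is such that 1, v₁, …, vₘ are linearly independent over ℚ, then the sequence ({kv₁}, …, {kvₘ}) for k ∈ ℕ is dense in [0,1]ᵐ. -/

import Mathlib

open Submodule Set Module

variable {E : Type*} [NormedAddCommGroup E] [NormedSpace ℝ E]

/-- Norm isolation implies discrete topology for a ℤ-submodule. -/
lemma discrete_of_isolated (L : Submodule ℤ E) {ε : ℝ} (hε : 0 < ε)
    (h : ∀ x ∈ L, ‖x‖ < ε → x = 0) : DiscreteTopology L := by
  apply discreteTopology_of_isOpen_singleton_zero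
  have : ({0} : Set L) = Subtype.val ⁻¹' Metric.ball (0 : E) ε := by
    ext x
    simp only [Set.mem_singleton_iff, Set.mem_preimage, Metric.mem_ball, dist_zero_right]
    constructor
    · rintro rfl; simpa using hε
    · intro hx
      exact Subtype.ext (h x x.2 hx)
  rw [this]
  exact (Metric.isOpen_ball).preimage continuous_subtype_val

/-- A closed ℤ-submodule of a proper ℝ-space containing no line is norm-isolated at 0. -/
lemma isolated_of_no_line [ProperSpace E] (L : Submodule ℤ E)
    (hc : IsClosed (L : Set E)) (hl : ∀ x : E, (∀ t : ℝ, t • x ∈ L) → x = 0) :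
    ∃ ε : ℝ, 0 < ε ∧ ∀ x ∈ L, ‖x‖ < ε → x = 0 := by
  by_contra hcon
  push_neg at hcon
  have hx : ∀ n : ℕ, ∃ x : E, x ∈ L ∧ ‖x‖ < 1 / (n + 1) ∧ x ≠ 0 := by
    intro n
    obtain ⟨x, hxL, hxn, hx0⟩ := hcon (1 / (n + 1)) (by positivity)
    exact ⟨x, hxL, hxn, hx0⟩
  choose x hxL hxn hx0 using hx
  set u : ℕ → E := fun n => ‖x n‖⁻¹ • x n with hu
  have hnorm : ∀ n, ‖x n‖ ≠ 0 := fun n => norm_ne_zero_iff.mpr (hx0 n)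
  have husphere : ∀ n, u n ∈ Metric.sphere (0 : E) 1 := by
    intro n
    simp [hu, norm_smul, abs_of_nonneg (inv_nonneg.mpr (norm_nonneg _)),
      inv_mul_cancel₀ (hnorm n)]
  obtain ⟨w, hw, φ, hφ, hconv⟩ := (isCompact_sphere (0 : E) 1).tendsto_subseq husphere
  have hw0 : w ≠ 0 := by
    intro h; rw [h] at hw; simp at hw
  apply hw0
  apply hl
  intro t
  -- t • w is limit of ⌊t / ‖x (φ k)‖⌋ • x (φ k) ∈ L
  have hr0 : ∀ k, (0:ℝ) < ‖x (φ k)‖ := fun k =>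
    lt_of_le_of_ne (norm_nonneg _) (Ne.symm (hnorm (φ k)))
  set r : ℕ → ℝ := fun k => ‖x (φ k)‖ with hrdef
  have hrlim : Filter.Tendsto r Filter.atTop (nhds 0) := by
    apply squeeze_zero (fun k => (hr0 k).le) (fun k => ?_)
      tendsto_one_div_add_atTop_nhds_zero_nat
    calc r k ≤ 1 / (φ k + 1) := (hxn (φ k)).le
    _ ≤ 1 / (k + 1) := by
        apply one_div_le_one_div_of_le (by positivity)
        have : (k:ℝ) ≤ (φ k : ℝ) := by exact_mod_cast hφ.le_apply
        linarith
  have ha : Filter.Tendsto (fun k => (⌊t / r k⌋ : ℝ) * r k) Filter.atTop (nhds t) := by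
    rw [tendsto_iff_dist_tendsto_zero]
    apply squeeze_zero (fun k => dist_nonneg) (fun k => ?_) hrlim
    have hs : t = (t / r k) * r k := (div_mul_cancel₀ t (hr0 k).ne').symm
    have h1 : (0:ℝ) ≤ t / r k - ⌊t / r k⌋ := by
      have := Int.floor_le (t / r k); linarith
    have h2 : t / r k - ⌊t / r k⌋ < 1 := by
      have := Int.lt_floor_add_one (t / r k); linarith
    rw [Real.dist_eq, abs_le]
    constructor <;> nlinarith [hr0 k]
  have hclim : Filter.Tendsto (fun k => (⌊t / r k⌋ : ℤ) • x (φ k)) Filter.atTop (nhds (t • w)) := by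
    have heq : ∀ k, (⌊t / r k⌋ : ℤ) • x (φ k) = ((⌊t / r k⌋ : ℝ) * r k) • u (φ k) := by
      intro k
      rw [← Int.cast_smul_eq_zsmul ℝ, mul_smul]
      congr 1
      rw [hu]
      rw [smul_smul, mul_inv_cancel₀ (hnorm (φ k)), one_smul]
    simp_rw [heq]
    exact ha.smul hconv
  exact hc.mem_of_tendsto hclim (Filter.Eventually.of_forall
    (fun k => L.smul_mem _ (hxL (φ k))))



lemma exists_int_functional [FiniteDimensional ℝ E] (H : AddSubgroup E)
    (hc : IsClosed (H : Set E)) (hne : (H : Set E) ≠ Set.univ) :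
    ∃ f : E →ₗ[ℝ] ℝ, f ≠ 0 ∧ ∀ h ∈ H, ∃ n : ℤ, f h = n := by
  classical
  -- the maximal subspace contained in H
  set V : Submodule ℝ E :=
    { carrier := {x | ∀ t : ℝ, t • x ∈ H}
      add_mem' := fun {a b} ha hb t => by
        simpa [smul_add] using H.add_mem (ha t) (hb t)
      zero_mem' := fun t => by simpa using H.zero_mem
      smul_mem' := fun c x hx t => by simpa [smul_smul] using hx (t * c) } with hVdef
  have hVH : (V : Set E) ⊆ (H : Set E) := fun x hx => by simpa using hx 1
  have hV : V ≠ ⊤ := by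
    intro hV
    apply hne
    rw [Set.eq_univ_iff_forall]
    intro x
    exact hVH (by rw [hV]; trivial)
  obtain ⟨W, hW⟩ := Submodule.exists_isCompl V
  set Λ : Submodule ℤ E := (AddSubgroup.toIntSubmodule H) ⊓ (W.restrictScalars ℤ) with hΛdef
  have hΛmem : ∀ x : E, x ∈ Λ ↔ x ∈ H ∧ x ∈ W := fun x => Iff.rfl
  have hΛc : IsClosed (Λ : Set E) := by
    have : (Λ : Set E) = (H : Set E) ∩ (W : Set E) := rfl
    rw [this]
    exact hc.inter W.closed_of_finiteDimensional
  have hl : ∀ x : E, (∀ t : ℝ, t • x ∈ Λ) → x = 0 := by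
    intro x hx
    have hxV : x ∈ V := fun t => ((hΛmem _).mp (hx t)).1
    have hxW : x ∈ W := by simpa using ((hΛmem _).mp (hx 1)).2
    exact (Submodule.mem_bot ℝ).mp (hW.inf_eq_bot ▸ Submodule.mem_inf.mpr ⟨hxV, hxW⟩)
  obtain ⟨ε, hε, hiso⟩ := isolated_of_no_line Λ hΛc hl
  haveI : DiscreteTopology Λ := discrete_of_isolated Λ hε hiso
  set F : Submodule ℝ E := Submodule.span ℝ (Λ : Set E) with hFdef
  have hΛF : (Λ : Set E) ⊆ (F : Set E) := Submodule.subset_span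
  have hFW : F ≤ W := Submodule.span_le.mpr (fun x hx => ((hΛmem _).mp hx).2)
  set Λ' : Submodule ℤ F := Λ.comap (F.subtype.restrictScalars ℤ) with hΛ'def
  haveI : DiscreteTopology Λ' := by
    apply discrete_of_isolated Λ' hε
    intro x hx hxn
    exact Subtype.ext (hiso _ hx hxn)
  haveI : IsZLattice ℝ Λ' := by
    constructor
    apply Submodule.map_injective_of_injective F.injective_subtype
    rw [Submodule.map_span, Submodule.map_top, Submodule.range_subtype]
    have : F.subtype '' (Λ' : Set F) = (Λ : Set E) := by
      ext x
      constructor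
      · rintro ⟨y, hy, rfl⟩; exact hy
      · intro hx; exact ⟨⟨x, hΛF hx⟩, hx, rfl⟩
    rw [this]
  haveI : Module.Finite ℤ Λ' := ZLattice.module_finite ℝ Λ'
  haveI : Module.Free ℤ Λ' := ZLattice.module_free ℝ Λ'
  set ι := Module.Free.ChooseBasisIndex ℤ Λ' with hι
  set b₀ : Basis ι ℤ Λ' := Module.Free.chooseBasis ℤ Λ' with hb₀
  set b : Basis ι ℝ F := b₀.ofZLatticeBasis ℝ Λ' with hb
  have hspan : Submodule.span ℤ (Set.range (b : ι → F)) = Λ' := b₀.ofZLatticeBasis_span ℝ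
  -- decomposition of elements of H
  have hdecomp : ∀ h ∈ H, ∃ a ∈ V, ∃ w, w ∈ Λ ∧ a + w = h := by
    intro h hh
    have : h ∈ V ⊔ W := by rw [hW.sup_eq_top]; trivial
    obtain ⟨a, ha, w, hw, haw⟩ := Submodule.mem_sup.mp this
    refine ⟨a, ha, w, (hΛmem w).mpr ⟨?_, hw⟩, haw⟩
    have : w = h - a := by rw [← haw]; abel
    rw [this]
    exact H.sub_mem hh (hVH ha)
  by_cases hsup : V ⊔ F = ⊤
  · -- lattice case
    have hdisj : Disjoint V F := (hW.disjoint.mono_right hFW)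
    have hcompl : IsCompl V F := ⟨hdisj, codisjoint_iff.mpr hsup⟩
    haveI : Nonempty ι := by
      by_contra hni
      haveI : IsEmpty ι := not_nonempty_iff.mp hni
      apply hV
      have hF : F = ⊥ := by
        have h0 : finrank ℝ F = 0 := by
          rw [finrank_eq_card_basis b]; simp
        exact Submodule.finrank_eq_zero.mp h0
      rw [← hsup, hF, sup_bot_eq]
    set i₀ : ι := Classical.arbitrary ι
    set π : E →ₗ[ℝ] F := F.projectionOnto V hcompl.symm with hπ
    refine ⟨(b.coord i₀).comp π, ?_, ?_⟩
    · intro hf0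
      have h1 : ((b.coord i₀).comp π) ((b i₀ : F) : E) = 1 := by
        simp [hπ, Submodule.projectionOnto_apply_left]
      rw [hf0] at h1
      simpa using h1
    · intro h hh
      obtain ⟨a, ha, w, hwΛ, haw⟩ := hdecomp h hh
      have hwF : w ∈ F := hΛF hwΛ
      have hπh : π h = ⟨w, hwF⟩ := by
        rw [← haw]
        rw [map_add]
        rw [Submodule.projectionOnto_apply_of_mem_right hcompl.symm ha]
        have : π w = π ((⟨w, hwF⟩ : F) : E) := rfl
        rw [zero_add, this, Submodule.projectionOnto_apply_left]
      have hmem : (⟨w, hwF⟩ : F) ∈ Submodule.span ℤ (Set.range (b : ι → F)) := by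
        rw [hspan]
        exact hwΛ
      obtain ⟨n, hn⟩ := (b.mem_span_iff_repr_mem ℤ _).mp hmem i₀
      refine ⟨n, ?_⟩
      simp only [LinearMap.comp_apply, hπh]
      rw [Basis.coord_apply, ← hn]
      rfl
  · -- proper subspace case
    obtain ⟨f, hf0, hfmap⟩ := Submodule.exists_dual_map_eq_bot_of_lt_top
      (lt_top_iff_ne_top.mpr hsup) inferInstance
    refine ⟨f, hf0, ?_⟩
    intro h hh
    obtain ⟨a, ha, w, hwΛ, haw⟩ := hdecomp h hh
    have : h ∈ V ⊔ F :=
      Submodule.mem_sup.mpr ⟨a, ha, w, hΛF hwΛ, haw⟩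
    refine ⟨0, ?_⟩
    have hmem : f h ∈ Submodule.map f (V ⊔ F) := ⟨h, this, rfl⟩
    rw [hfmap] at hmem
    simpa using hmem



lemma dense_orbit (m : ℕ) (v : Fin m → ℝ)
    (hli : LinearIndependent ℚ (Fin.cons (1 : ℝ) v : Fin (m + 1) → ℝ)) :
    Dense ((AddSubgroup.closure
      (insert v (Set.range (fun i : Fin m => (Pi.single i 1 : Fin m → ℝ))))) :
        Set (Fin m → ℝ)) := by
  classical
  by_contra hnd
  set S : AddSubgroup (Fin m → ℝ) := AddSubgroup.closure
      (insert v (Set.range (fun i : Fin m => (Pi.single i 1 : Fin m → ℝ)))) with hS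
  set H : AddSubgroup (Fin m → ℝ) := S.topologicalClosure with hH
  have hHc : IsClosed (H : Set (Fin m → ℝ)) := S.isClosed_topologicalClosure
  have hne : (H : Set (Fin m → ℝ)) ≠ Set.univ := by
    intro h
    apply hnd
    have : (H : Set (Fin m → ℝ)) = closure (S : Set (Fin m → ℝ)) := rfl
    rw [dense_iff_closure_eq, ← this, h]
  obtain ⟨f, hf0, hfint⟩ := exists_int_functional H hHc hne
  have hSH : S ≤ H := S.le_topologicalClosure
  have hvS : v ∈ S := AddSubgroup.subset_closure (Set.mem_insert _ _)
  have heS : ∀ i, (Pi.single i 1 : Fin m → ℝ) ∈ S := fun i =>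
    AddSubgroup.subset_closure (Set.mem_insert_of_mem _ ⟨i, rfl⟩)
  obtain ⟨c, hc⟩ := hfint v (hSH hvS)
  choose N hN using fun i => hfint _ (hSH (heS i))
  have hrepr : ∀ x : Fin m → ℝ, f x = ∑ i, x i * (N i : ℝ) := by
    intro x
    rw [f.pi_apply_eq_sum_univ x]
    refine Finset.sum_congr rfl fun i _ => ?_
    have hsingle : (fun j => if i = j then (1:ℝ) else 0) = Pi.single i 1 := by
      ext j; simp [Pi.single_apply, eq_comm]
    rw [smul_eq_mul, hsingle, hN i]
  -- linear independence contradiction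
  have hsum : (∑ i, (N i : ℝ) * v i) = (c : ℝ) := by
    rw [← hc, hrepr v]
    exact Finset.sum_congr rfl fun i _ => mul_comm _ _
  set g : Fin (m + 1) → ℚ := Fin.cons (-(c : ℚ)) (fun i => (N i : ℚ)) with hg
  have hzero : ∀ i, g i = 0 := by
    apply Fintype.linearIndependent_iff.mp hli
    rw [Fin.sum_univ_succ]
    simp only [hg, Fin.cons_zero, Fin.cons_succ, Rat.smul_def]
    push_cast
    rw [hsum]
    ring
  have hN0 : ∀ i, N i = 0 := by
    intro i
    have := hzero i.succ
    simpa [hg] using this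
  apply hf0
  refine LinearMap.ext fun x => ?_
  rw [hrepr x]
  simp [hN0]



theorem stmt_17 (m : ℕ) (v : Fin m → ℝ)
    (hli : LinearIndependent ℚ (Fin.cons (1 : ℝ) v : Fin (m + 1) → ℝ)) :
    ∀ x : Fin m → ℝ, (∀ i, x i ∈ Set.Icc (0 : ℝ) 1) → ∀ ε : ℝ, 0 < ε →
      ∃ k : ℕ, ∀ i, |Int.fract ((k : ℝ) * v i) - x i| ≤ ε := by
  classical
  haveI : Fact ((0:ℝ) < 1) := ⟨one_pos⟩
  set T := AddCircle (1:ℝ) with hT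
  set φ : ℝ →+ T := QuotientAddGroup.mk' (AddSubgroup.zmultiples (1:ℝ)) with hφ
  set π : (Fin m → ℝ) →+ (Fin m → T) :=
    { toFun := fun x i => φ (x i)
      map_zero' := by ext i; simp
      map_add' := fun a b => by ext i; simp } with hπ
  have hπcont : Continuous π := by
    apply continuous_pi
    intro i
    exact continuous_quot_mk.comp (continuous_apply i)
  have hπsurj : Function.Surjective π := by
    intro y
    refine ⟨fun i => (y i).out, ?_⟩
    ext i
    exact QuotientAddGroup.out_eq' (y i)
  set g : Fin m → T := π v with hg
  -- ℤ-multiples of g are dense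
  have hzd : DenseRange (fun n : ℤ => n • g) := by
    have hd := dense_orbit m v hli
    set S := AddSubgroup.closure
      (insert v (Set.range (fun i : Fin m => (Pi.single i 1 : Fin m → ℝ)))) with hS
    have hsub : S ≤ AddSubgroup.comap π (AddSubgroup.zmultiples g) := by
      rw [hS, AddSubgroup.closure_le]
      rintro w (rfl | ⟨i, rfl⟩)
      · exact AddSubgroup.mem_zmultiples g
      · have h0 : π (Pi.single i 1) = 0 := by
          ext j
          by_cases hji : j = i
          · subst hji
            simp only [hπ, AddMonoidHom.coe_mk, ZeroHom.coe_mk, Pi.single_eq_same]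
            show ((1:ℝ) : AddCircle (1:ℝ)) = 0
            exact AddCircle.coe_period 1
          · simp [hπ, Pi.single_eq_of_ne hji]
        rw [SetLike.mem_coe, AddSubgroup.mem_comap, h0]
        exact zero_mem _
    have himg : Dense (π '' (S : Set (Fin m → ℝ))) :=
      (hπsurj.denseRange).dense_image hπcont hd
    have hsubset : π '' (S : Set (Fin m → ℝ)) ⊆ (AddSubgroup.zmultiples g : Set (Fin m → T)) := by
      rintro _ ⟨w, hw, rfl⟩
      exact hsub hw
    have : Dense ((AddSubgroup.zmultiples g : AddSubgroup (Fin m → T)) : Set (Fin m → T)) :=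
      himg.mono hsubset
    have hrange : Set.range (fun n : ℤ => n • g)
        = ((AddSubgroup.zmultiples g : AddSubgroup (Fin m → T)) : Set (Fin m → T)) := by
      ext w
      simp [AddSubgroup.mem_zmultiples_iff, eq_comm]
    rw [DenseRange, hrange]
    exact this
  have hnd : DenseRange (fun n : ℕ => n • g) := denseRange_zsmul_iff_nsmul.mp hzd
  -- extraction
  intro x hx ε hε
  by_cases hε1 : 1 ≤ ε
  · refine ⟨0, fun i => ?_⟩
    have := hx i
    rw [Nat.cast_zero, zero_mul, Int.fract_zero]
    rw [abs_le]
    constructor <;> [linarith [this.2]; linarith [this.1]]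
  push_neg at hε1
  set δ := ε / 2 with hδ
  have hδ0 : 0 < δ := by positivity
  have hδ1 : δ ≤ 1 - δ := by rw [hδ]; linarith
  set y : Fin m → ℝ := fun i => max δ (min (x i) (1 - δ)) with hy
  have hy1 : ∀ i, δ ≤ y i := fun i => le_max_left _ _
  have hy2 : ∀ i, y i ≤ 1 - δ := fun i => max_le hδ1 (min_le_right _ _)
  have hyx1 : ∀ i, y i ≤ x i + δ := by
    intro i
    apply max_le (by linarith [(hx i).1])
    calc min (x i) (1 - δ) ≤ x i := min_le_left _ _
    _ ≤ x i + δ := by linarith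
  have hyx2 : ∀ i, x i - δ ≤ y i := by
    intro i
    refine le_trans (le_min (by linarith) (by linarith [(hx i).2])) (le_max_right _ _)
  set U : Set (Fin m → T) := Set.univ.pi fun i => (fun t : ℝ => φ t) '' Set.Ioo (y i - δ) (y i + δ)
    with hU
  have hUopen : IsOpen U := by
    apply isOpen_set_pi Set.finite_univ
    intro i _
    exact QuotientAddGroup.isOpenMap_coe _ isOpen_Ioo
  have hUne : U.Nonempty := by
    refine ⟨π y, ?_⟩
    rw [hU, Set.mem_pi]
    intro i _
    exact ⟨y i, ⟨by linarith, by linarith⟩, rfl⟩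
  obtain ⟨k, hk⟩ := hnd.exists_mem_open hUopen hUne
  refine ⟨k, fun i => ?_⟩
  have hki : (k • g) i ∈ (fun t : ℝ => φ t) '' Set.Ioo (y i - δ) (y i + δ) := by
    rw [hU, Set.mem_pi] at hk
    exact hk i trivial
  obtain ⟨s, hsIoo, hs⟩ := hki
  have hkg : (k • g) i = φ ((k : ℝ) * v i) := by
    show k • (φ (v i)) = φ ((k : ℝ) * v i)
    rw [← map_nsmul, nsmul_eq_mul]
  rw [hkg] at hs
  have hsub : ∃ n : ℤ, (k : ℝ) * v i = s + n := by
    rw [hφ, QuotientAddGroup.mk'_eq_mk'] at hs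
    obtain ⟨z, hz, hz'⟩ := hs
    obtain ⟨n, hn⟩ := AddSubgroup.mem_zmultiples_iff.mp hz
    refine ⟨n, ?_⟩
    rw [← hz', ← hn]
    simp
  obtain ⟨n, hn⟩ := hsub
  have hfract : Int.fract ((k : ℝ) * v i) = s := by
    rw [hn, Int.fract_add_intCast]
    apply Int.fract_eq_self.mpr
    exact ⟨by linarith [hsIoo.1, hy1 i], by linarith [hsIoo.2, hy2 i]⟩
  rw [hfract, abs_le]
  constructor
  · linarith [hsIoo.1, hyx2 i]
  · linarith [hsIoo.2, hyx1 i]
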